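/- Let V be a 2g-dimensional symplectic vector space with symplectic form omega in Λ²V. The map Λ^{k-2}V → Λ^k V given by wedging with omega is injective for k <= g. Consequently dim W^k = C(2g,k) - C(2g,k-2) for 0 <= k <= g, where W^k = Λ^k V/(omega ∧ Λ^{k-2}V). -/

import Mathlib

open ExteriorAlgebra

namespace OmegaWedge

variable (n : ℕ)

abbrev V (n : ℕ) := Fin n → ℂ
abbrev E (n : ℕ) := ExteriorAlgebra ℂ (V n)

noncomputable def ee (i : Fin n) : E n := ExteriorAlgebra.ι ℂ (Pi.single i 1)

lemma ee_def {n : ℕ} (i : Fin n) : ee n i = ExteriorAlgebra.ι ℂ (Pi.single i 1) := rfl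

noncomputable def dd (i : Fin n) : Module.Dual ℂ (V n) := LinearMap.proj i

noncomputable def ctr (d : Module.Dual ℂ (V n)) : E n →ₗ[ℂ] E n :=
  CliffordAlgebra.contractLeft d

variable {n}

lemma ctr_ι_mul (d : Module.Dual ℂ (V n)) (a : V n) (x : E n) :
    ctr n d (ExteriorAlgebra.ι ℂ a * x) = d a • x - ExteriorAlgebra.ι ℂ a * ctr n d x :=
  CliffordAlgebra.contractLeft_ι_mul d a x

lemma ctr_ι (d : Module.Dual ℂ (V n)) (a : V n) :
    ctr n d (ExteriorAlgebra.ι ℂ a) = algebraMap ℂ (E n) (d a) :=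
  CliffordAlgebra.contractLeft_ι (d := d) _ a

lemma ctr_algebraMap (d : Module.Dual ℂ (V n)) (r : ℂ) :
    ctr n d (algebraMap ℂ (E n) r) = 0 :=
  CliffordAlgebra.contractLeft_algebraMap (d := d) _ r

lemma ctr_one (d : Module.Dual ℂ (V n)) : ctr n d (1 : E n) = 0 :=
  CliffordAlgebra.contractLeft_one (d := d) _

lemma dd_single (i j : Fin n) : dd n i (Pi.single j 1) = if j = i then 1 else 0 := by
  simp [dd, Pi.single_apply, eq_comm]

lemma ι_anticomm (a b : V n) :
    ExteriorAlgebra.ι ℂ a * ExteriorAlgebra.ι ℂ b = -(ExteriorAlgebra.ι ℂ b * ExteriorAlgebra.ι ℂ a) := by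
  have h := ExteriorAlgebra.ι_sq_zero (R := ℂ) (a + b)
  have ha := ExteriorAlgebra.ι_sq_zero (R := ℂ) a
  have hb := ExteriorAlgebra.ι_sq_zero (R := ℂ) b
  rw [map_add, add_mul, mul_add, mul_add, ha, hb, zero_add, add_zero] at h
  exact eq_neg_of_add_eq_zero_left h


noncomputable def mono : List (Fin n) → E n
  | [] => 1
  | a :: l => ee n a * mono l

@[simp] lemma mono_nil : mono ([] : List (Fin n)) = 1 := rfl
@[simp] lemma mono_cons (a : Fin n) (l : List (Fin n)) :
    mono (a :: l) = ee n a * mono l := rfl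

lemma ctr_mono_of_not_mem (j : Fin n) (l : List (Fin n)) (hj : j ∉ l) :
    ctr n (dd n j) (mono l) = 0 := by
  induction l with
  | nil => simpa [mono] using ctr_one (dd n j)
  | cons a t ih =>
    have hja : a ≠ j := fun h => hj (h ▸ List.mem_cons_self (a := a) (l := t))
    have hjt : j ∉ t := fun h => hj (List.mem_cons_of_mem a h)
    rw [mono_cons, ee, ctr_ι_mul, dd_single, if_neg hja, ih hjt, mul_zero, zero_smul, sub_zero]

lemma ctr_mono_of_mem (j : Fin n) (l : List (Fin n)) (hnd : l.Nodup) (hj : j ∈ l) :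
    ∃ ε : ℂ, (ε = 1 ∨ ε = -1) ∧ ctr n (dd n j) (mono l) = ε • mono (l.erase j) := by
  induction l with
  | nil => simp at hj
  | cons a t ih =>
    rcases List.nodup_cons.mp hnd with ⟨hat, hndt⟩
    by_cases hja : j = a
    · subst hja
      have hjt : j ∉ t := hat
      refine ⟨1, Or.inl rfl, ?_⟩
      rw [mono_cons, ee, ctr_ι_mul, dd_single, if_pos rfl, ctr_mono_of_not_mem j t hjt,
        mul_zero, sub_zero, List.erase_cons_head, one_smul]
    · have hjt : j ∈ t := by
        rcases List.mem_cons.mp hj with h | h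
        · exact absurd h hja
        · exact h
      obtain ⟨ε, hε, h⟩ := ih hndt hjt
      refine ⟨-ε, ?_, ?_⟩
      · rcases hε with h1 | h1 <;> simp [h1]
      · rw [mono_cons, ee, ctr_ι_mul, dd_single, if_neg (Ne.symm hja), h,
          List.erase_cons_tail, mono_cons, zero_smul, zero_sub, mul_smul_comm, neg_smul, ← ee]
        simpa using (Ne.symm hja)


lemma sort_erase (s : Finset (Fin n)) (a : Fin n) :
    (s.sort (· ≤ ·)).erase a = (s.erase a).sort (· ≤ ·) := by
  refine List.Perm.eq_of_pairwise' ((s.pairwise_sort (· ≤ ·)).erase a) ((s.erase a).pairwise_sort _) ?_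
  refine List.perm_of_nodup_nodup_toFinset_eq ((s.sort_nodup _).erase a) ((s.erase a).sort_nodup _) ?_
  ext x
  simp [List.mem_toFinset, (s.sort_nodup (· ≤ ·)).mem_erase_iff, Finset.mem_erase,
    Finset.mem_sort]

lemma sort_nonempty_eq (s : Finset (Fin n)) (hs : s.Nonempty) :
    s.sort (· ≤ ·) = s.min' hs :: (s.erase (s.min' hs)).sort (· ≤ ·) := by
  have hlen : 0 < (s.sort (· ≤ ·)).length := by
    rw [Finset.length_sort]; exact Finset.card_pos.mpr hs
  have hne : s.sort (· ≤ ·) ≠ [] := List.ne_nil_of_length_pos hlen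
  have hhead : (s.sort (· ≤ ·)).head hne = s.min' hs := by
    rw [List.head_eq_getElem_zero hne]
    exact Finset.sorted_zero_eq_min' (h := hlen)
  have htail : (s.sort (· ≤ ·)).tail = ((s.sort (· ≤ ·)).erase (s.min' hs)) := by
    conv_rhs => rw [← List.cons_head_tail hne, hhead]
    rw [List.erase_cons_head]
  conv_lhs => rw [← List.cons_head_tail hne, hhead, htail, sort_erase]


noncomputable def Phi : List (Fin n) → (E n →ₗ[ℂ] ℂ)
  | [] => (ExteriorAlgebra.algebraMapInv (R := ℂ) (M := V n)).toLinearMap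
  | a :: l => (Phi l).comp (ctr n (dd n a))

noncomputable def monoS (s : Finset (Fin n)) : E n := mono (s.sort (· ≤ ·))

lemma phi_eval : ∀ (c : ℕ) (s t : Finset (Fin n)), s.card = c → t.card = c →
    (s ≠ t → Phi (s.sort (· ≤ ·)) (monoS t) = 0) ∧
    (s = t → ∃ ε : ℂ, (ε = 1 ∨ ε = -1) ∧ Phi (s.sort (· ≤ ·)) (monoS t) = ε) := by
  intro c
  induction c with
  | zero =>
    intro s t hs ht
    have hs0 : s = ∅ := Finset.card_eq_zero.mp hs
    have ht0 : t = ∅ := Finset.card_eq_zero.mp ht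
    subst hs0; subst ht0
    refine ⟨fun h => absurd rfl h, fun _ => ⟨1, Or.inl rfl, ?_⟩⟩
    simp [Phi, monoS, Finset.sort_empty]
  | succ c ih =>
    intro s t hs ht
    have hsne : s.Nonempty := Finset.card_pos.mp (by omega)
    set m := s.min' hsne with hm_def
    have hPhi : ∀ x : E n, Phi (s.sort (· ≤ ·)) x
        = Phi ((s.erase m).sort (· ≤ ·)) (ctr n (dd n m) x) := by
      intro x; rw [sort_nonempty_eq s hsne]; rfl
    have hcs : (s.erase m).card = c := by
      rw [Finset.card_erase_of_mem (s.min'_mem hsne)]; omega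
    by_cases hm : m ∈ t
    · obtain ⟨ε, hε, hctr⟩ :=
        ctr_mono_of_mem m (t.sort (· ≤ ·)) (t.sort_nodup _) ((Finset.mem_sort _).2 hm)
      rw [sort_erase] at hctr
      have hct : (t.erase m).card = c := by
        rw [Finset.card_erase_of_mem hm]; omega
      constructor
      · intro hst
        have hne' : s.erase m ≠ t.erase m := by
          intro h
          apply hst
          have h2 : insert m (s.erase m) = insert m (t.erase m) := by rw [h]
          rwa [Finset.insert_erase (s.min'_mem hsne), Finset.insert_erase hm] at h2
        rw [hPhi, monoS, hctr, map_smul]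
        have h0 := (ih (s.erase m) (t.erase m) hcs hct).1 hne'
        rw [monoS] at h0
        rw [h0, smul_zero]
      · intro hst
        obtain ⟨ε', hε', h'⟩ := (ih (s.erase m) (t.erase m) hcs hct).2 (by rw [hst])
        refine ⟨ε * ε', ?_, ?_⟩
        · rcases hε with h1 | h1 <;> rcases hε' with h2 | h2 <;> simp [h1, h2]
        · rw [monoS] at h'
          rw [hPhi, monoS, hctr, map_smul, h', smul_eq_mul]
    · refine ⟨fun _ => ?_, fun hst => absurd (hst ▸ s.min'_mem hsne) hm⟩
      rw [hPhi, monoS, ctr_mono_of_not_mem m _ (by simpa [Finset.mem_sort] using hm), map_zero]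

lemma monoS_linearIndependent (k : ℕ) :
    LinearIndependent ℂ (fun S : {s : Finset (Fin n) // s.card = k} => monoS S.1) := by
  rw [Fintype.linearIndependent_iff]
  intro c hc S0
  obtain ⟨ε, hε, hval⟩ := (phi_eval k S0.1 S0.1 S0.2 S0.2).2 rfl
  have h2 := congrArg (Phi (S0.1.sort (· ≤ ·))) hc
  rw [map_sum, map_zero] at h2
  have hsum : ∑ S : {s : Finset (Fin n) // s.card = k},
      Phi (S0.1.sort (· ≤ ·)) (c S • monoS S.1) = c S0 * ε := by
    rw [Finset.sum_eq_single S0]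
    · rw [map_smul, hval, smul_eq_mul]
    · intro b _ hb
      rw [map_smul,
        (phi_eval k S0.1 b.1 S0.2 b.2).1 (fun h => hb (Subtype.ext h.symm)), smul_zero]
    · intro h; exact absurd (Finset.mem_univ S0) h
  rw [hsum] at h2
  have hε0 : ε ≠ 0 := by rcases hε with h1 | h1 <;> simp [h1]
  exact (mul_eq_zero.mp h2).resolve_right hε0


lemma mono_eq_prod (l : List (Fin n)) : mono l = (l.map (ee n)).prod := by
  induction l with
  | nil => rfl
  | cons a t ih => rw [mono_cons, ih, List.map_cons, List.prod_cons]

variable (n) in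
noncomputable def P : Submodule ℂ (E n) := LinearMap.range (ExteriorAlgebra.ι ℂ (M := V n))

lemma mono_mem (l : List (Fin n)) : mono l ∈ P n ^ l.length := by
  induction l with
  | nil =>
    rw [List.length_nil, pow_zero, mono_nil]
    exact Submodule.one_le.mp le_rfl
  | cons a t ih =>
    rw [mono_cons, List.length_cons, pow_succ']
    exact Submodule.mul_mem_mul ⟨_, rfl⟩ ih

lemma monoS_mem {k : ℕ} (S : Finset (Fin n)) (h : S.card = k) : monoS S ∈ P n ^ k := by
  have := mono_mem (S.sort (· ≤ ·))
  rwa [Finset.length_sort, h] at this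

lemma ofFn_sort {k : ℕ} (S : Finset (Fin n)) (h : S.card = k) :
    List.ofFn (fun j : Fin k => S.orderEmbOfFin h j) = S.sort (· ≤ ·) := by
  have hlen : (S.sort (· ≤ ·)).length = k := by rw [Finset.length_sort, h]
  subst hlen
  simpa [Finset.orderEmbOfFin_apply] using List.ofFn_getElem (xs := S.sort (· ≤ ·))

lemma iotaMulti_sorted_eq {k : ℕ} (S : Finset (Fin n)) (h : S.card = k) :
    ExteriorAlgebra.ιMulti ℂ k (fun j => (Pi.single (S.orderEmbOfFin h j) 1 : V n)) = monoS S := by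
  rw [ExteriorAlgebra.ιMulti_apply, monoS, mono_eq_prod, ← ofFn_sort S h, List.map_ofFn]
  rfl

lemma iotaMulti_mem_span (k : ℕ) (v : Fin k → V n) :
    ExteriorAlgebra.ιMulti ℂ k v ∈ Submodule.span ℂ
      (Set.range fun S : {s : Finset (Fin n) // s.card = k} => monoS S.1) := by
  have hv : v = fun j => ∑ i : Fin n, v j i • (Pi.single i 1 : V n) := by
    funext j; ext i'
    simp [Pi.single_apply, Finset.sum_apply, eq_comm]
  have hexp : ExteriorAlgebra.ιMulti ℂ k v =
      ∑ f : Fin k → Fin n, (∏ j, v j (f j)) •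
        ExteriorAlgebra.ιMulti ℂ k (fun j => (Pi.single (f j) 1 : V n)) := by
    conv_lhs => rw [hv]
    rw [show ∀ w, ExteriorAlgebra.ιMulti ℂ k (M := V n) w
        = (ExteriorAlgebra.ιMulti ℂ k (M := V n)).toMultilinearMap w from fun _ => rfl]
    rw [MultilinearMap.map_sum]
    refine Finset.sum_congr rfl fun f _ => ?_
    rw [MultilinearMap.map_smul_univ]
    rfl
  rw [hexp]
  refine Submodule.sum_mem _ fun f _ => Submodule.smul_mem _ _ ?_
  by_cases hf : Function.Injective f
  · set S : Finset (Fin n) := Finset.image f Finset.univ with hS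
    have hcard : S.card = k := by
      rw [hS, Finset.card_image_of_injective _ hf, Finset.card_univ, Fintype.card_fin]
    set σ : Fin k → Fin k := fun j => (S.orderIsoOfFin hcard).symm
      ⟨f j, by simp [hS]⟩ with hσ
    have hσinj : Function.Injective σ := by
      intro a b hab
      apply hf
      have := congrArg (fun x => ((S.orderIsoOfFin hcard) x : Fin n)) hab
      simpa [hσ] using this
    have hσbij := (Finite.injective_iff_bijective).mp hσinj
    set σe : Equiv.Perm (Fin k) := Equiv.ofBijective σ hσbij with hσe
    have hcomp : (fun j => (Pi.single (f j) 1 : V n))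
        = (fun j => (Pi.single (S.orderEmbOfFin hcard j) 1 : V n)) ∘ σe := by
      funext j
      have : S.orderEmbOfFin hcard (σe j) = f j := by
        change ((S.orderIsoOfFin hcard) (σ j) : Fin n) = f j
        rw [hσ, OrderIso.apply_symm_apply]
      simp [Function.comp, this]
    rw [hcomp, AlternatingMap.map_perm, iotaMulti_sorted_eq S hcard]
    have hz : (Equiv.Perm.sign σe : ℤ) • monoS S = ((Equiv.Perm.sign σe : ℤ) : ℂ) • monoS S :=
      (Int.cast_smul_eq_zsmul ℂ _ _).symm
    rw [Units.smul_def, hz]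
    exact Submodule.smul_mem _ _ (Submodule.subset_span ⟨⟨S, hcard⟩, rfl⟩)
  · obtain ⟨a, b, hab, hne⟩ := Function.not_injective_iff.mp hf
    rw [AlternatingMap.map_eq_zero_of_eq _ _ (by rw [hab]) hne]
    exact Submodule.zero_mem _

lemma span_monoS (k : ℕ) :
    Submodule.span ℂ (Set.range fun S : {s : Finset (Fin n) // s.card = k} => monoS S.1)
      = P n ^ k := by
  refine le_antisymm (Submodule.span_le.mpr ?_) ?_
  · rintro x ⟨S, rfl⟩
    exact monoS_mem S.1 S.2
  · rw [show P n ^ k = ⋀[ℂ]^k (V n) from rfl, ← ExteriorAlgebra.ιMulti_span_fixedDegree]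
    refine Submodule.span_le.mpr ?_
    rintro x ⟨v, rfl⟩
    exact iotaMulti_mem_span k v

noncomputable def basisPow (k : ℕ) :
    Module.Basis {s : Finset (Fin n) // s.card = k} ℂ (P n ^ k : Submodule ℂ (E n)) :=
  (Module.Basis.span (monoS_linearIndependent (n := n) k)).map
    (LinearEquiv.ofEq _ _ (span_monoS k))

lemma finrank_pow (k : ℕ) :
    Module.finrank ℂ (P n ^ k : Submodule ℂ (E n)) = n.choose k := by
  rw [Module.finrank_eq_card_basis (basisPow k), Fintype.card_finset_len, Fintype.card_fin]

instance pow_finiteDimensional (k : ℕ) :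
    FiniteDimensional ℂ (P n ^ k : Submodule ℂ (E n)) :=
  Module.Finite.of_basis (basisPow k)


lemma ctr_P0 (d : Module.Dual ℂ (V n)) {x : E n} (hx : x ∈ P n ^ 0) :
    ctr n d x = 0 := by
  rw [pow_zero] at hx
  obtain ⟨r, rfl⟩ := Submodule.mem_one.mp hx
  exact ctr_algebraMap d r

lemma ctr_mem (d : Module.Dual ℂ (V n)) {k : ℕ} {x : E n} (hx : x ∈ P n ^ (k + 1)) :
    ctr n d x ∈ P n ^ k := by
  have main : ∀ (m : ℕ) (x : E n), x ∈ P n ^ m → ctr n d x ∈ P n ^ (m - 1) := by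
    intro m x hx
    refine Submodule.pow_induction_on_left' (M := P n)
      (C := fun m x _ => ctr n d x ∈ P n ^ (m - 1)) ?_ ?_ ?_ hx
    · intro r
      rw [ctr_algebraMap]
      exact Submodule.zero_mem _
    · intro x y i _ _ hx hy
      rw [map_add]; exact Submodule.add_mem _ hx hy
    · rintro m ⟨v, rfl⟩ i x hx ih
      rw [ctr_ι_mul]
      refine Submodule.sub_mem _ (Submodule.smul_mem _ _ (by simpa using hx)) ?_
      rcases Nat.eq_zero_or_pos i with hi | hi
      · subst hi
        rw [ctr_P0 d hx, mul_zero]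
        exact Submodule.zero_mem _
      · have h2 : ExteriorAlgebra.ι ℂ v * ctr n d x ∈ P n * P n ^ (i - 1) :=
          Submodule.mul_mem_mul ⟨v, rfl⟩ ih
        rw [← pow_succ'] at h2
        have : i - 1 + 1 = i := by omega
        rwa [this] at h2
  simpa using main (k + 1) x hx

lemma ι_eq_sum (v : V n) :
    ExteriorAlgebra.ι ℂ v = ∑ j : Fin n, v j • ee n j := by
  have : v = ∑ j : Fin n, v j • (Pi.single j 1 : V n) := by
    funext i'
    simp [Pi.single_apply, Finset.sum_apply, eq_comm]
  conv_lhs => rw [this]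
  rw [map_sum]
  exact Finset.sum_congr rfl fun j _ => by rw [map_smul]; rfl

lemma euler {k : ℕ} {x : E n} (hx : x ∈ P n ^ k) :
    ∑ j : Fin n, ee n j * ctr n (dd n j) x = (k : ℂ) • x := by
  refine Submodule.pow_induction_on_left' (M := P n)
    (C := fun k x _ => ∑ j : Fin n, ee n j * ctr n (dd n j) x = (k : ℂ) • x) ?_ ?_ ?_ hx
  · intro r
    simp [ctr_algebraMap]
  · intro x y i _ _ hx hy
    simp only [map_add, mul_add, Finset.sum_add_distrib, hx, hy, smul_add]
  · rintro m ⟨v, rfl⟩ i x hx ih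
    have step : ∀ j : Fin n, ee n j * ctr n (dd n j) (ExteriorAlgebra.ι ℂ v * x)
        = v j • (ee n j * x) + ExteriorAlgebra.ι ℂ v * (ee n j * ctr n (dd n j) x) := by
      intro j
      have hdd : dd n j v = v j := rfl
      rw [ctr_ι_mul, mul_sub, mul_smul_comm, hdd, ← mul_assoc, ee_def,
        ι_anticomm, neg_mul, mul_assoc, sub_neg_eq_add]
    calc ∑ j : Fin n, ee n j * ctr n (dd n j) (ExteriorAlgebra.ι ℂ v * x)
        = ∑ j : Fin n, (v j • (ee n j * x)
            + ExteriorAlgebra.ι ℂ v * (ee n j * ctr n (dd n j) x)) :=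
          Finset.sum_congr rfl fun j _ => step j
      _ = (∑ j : Fin n, v j • ee n j) * x
            + ExteriorAlgebra.ι ℂ v * ∑ j : Fin n, ee n j * ctr n (dd n j) x := by
          rw [Finset.sum_add_distrib, ← Finset.mul_sum, Finset.sum_mul]
          simp [smul_mul_assoc]
      _ = ExteriorAlgebra.ι ℂ v * x + (i : ℂ) • (ExteriorAlgebra.ι ℂ v * x) := by
          rw [← ι_eq_sum, ih, mul_smul_comm]
      _ = ((i + 1 : ℕ) : ℂ) • (ExteriorAlgebra.ι ℂ v * x) := by
          push_cast
          rw [add_smul, one_smul, add_comm]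


lemma ctr_cross {d : Module.Dual ℂ (V n)} {a b : V n} (ha : d a = 0) (hb : d b = 0)
    (x : E n) :
    ctr n d (ExteriorAlgebra.ι ℂ a * (ExteriorAlgebra.ι ℂ b * x))
      = ExteriorAlgebra.ι ℂ a * (ExteriorAlgebra.ι ℂ b * ctr n d x) := by
  rw [ctr_ι_mul, ha, zero_smul, zero_sub, ctr_ι_mul, hb, zero_smul, zero_sub, mul_neg, neg_neg]

lemma ctr_pair {al be : Module.Dual ℂ (V n)} {a b : V n}
    (haa : al a = 1) (hab : al b = 0) (hba : be a = 0) (hbb : be b = 1) (x : E n) :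
    ctr n be (ctr n al (ExteriorAlgebra.ι ℂ a * (ExteriorAlgebra.ι ℂ b * x)))
      = x - ExteriorAlgebra.ι ℂ b * ctr n be x - ExteriorAlgebra.ι ℂ a * ctr n al x
        + ExteriorAlgebra.ι ℂ a * (ExteriorAlgebra.ι ℂ b * ctr n be (ctr n al x)) := by
  have h1 : ctr n al (ExteriorAlgebra.ι ℂ a * (ExteriorAlgebra.ι ℂ b * x))
      = ExteriorAlgebra.ι ℂ b * x + ExteriorAlgebra.ι ℂ a * (ExteriorAlgebra.ι ℂ b * ctr n al x) := by
    rw [ctr_ι_mul, haa, one_smul, ctr_ι_mul, hab, zero_smul, zero_sub, mul_neg, sub_neg_eq_add]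
  have h2 : ctr n be (ExteriorAlgebra.ι ℂ b * x)
      = x - ExteriorAlgebra.ι ℂ b * ctr n be x := by
    rw [ctr_ι_mul, hbb, one_smul]
  have h3 : ctr n be (ExteriorAlgebra.ι ℂ a * (ExteriorAlgebra.ι ℂ b * ctr n al x))
      = -(ExteriorAlgebra.ι ℂ a * ctr n al x)
        + ExteriorAlgebra.ι ℂ a * (ExteriorAlgebra.ι ℂ b * ctr n be (ctr n al x)) := by
    rw [ctr_ι_mul, hba, zero_smul, zero_sub, ctr_ι_mul, hbb, one_smul, mul_sub, neg_sub]
    abel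
  rw [h1, map_add, h2, h3]
  abel


section Symplectic

variable (g : ℕ)

noncomputable def Aa (i : Fin g) : E (g + g) := ee (g + g) (Fin.castAdd g i)
noncomputable def Bb (i : Fin g) : E (g + g) := ee (g + g) (Fin.natAdd g i)
noncomputable def al (i : Fin g) : Module.Dual ℂ (V (g + g)) := dd (g + g) (Fin.castAdd g i)
noncomputable def be (i : Fin g) : Module.Dual ℂ (V (g + g)) := dd (g + g) (Fin.natAdd g i)
noncomputable def om : E (g + g) := ∑ i : Fin g, Aa g i * Bb g i
noncomputable def Lop : E (g + g) →ₗ[ℂ] E (g + g) :=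
  ∑ i : Fin g, (ctr (g + g) (be g i)).comp (ctr (g + g) (al g i))

variable {g}

lemma al_A (i j : Fin g) : al g i (Pi.single (Fin.castAdd g j) (1:ℂ)) = if i = j then 1 else 0 := by
  rw [al, dd_single]
  simp [Fin.ext_iff, eq_comm]

lemma al_B (i j : Fin g) : al g i (Pi.single (Fin.natAdd g j) (1:ℂ)) = 0 := by
  rw [al, dd_single, if_neg]
  have := i.isLt
  simp only [Fin.ext_iff, Fin.coe_natAdd, Fin.coe_castAdd]
  omega

lemma be_A (i j : Fin g) : be g i (Pi.single (Fin.castAdd g j) (1:ℂ)) = 0 := by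
  rw [be, dd_single, if_neg]
  have := j.isLt
  simp only [Fin.ext_iff, Fin.coe_natAdd, Fin.coe_castAdd]
  omega

lemma be_B (i j : Fin g) : be g i (Pi.single (Fin.natAdd g j) (1:ℂ)) = if i = j then 1 else 0 := by
  rw [be, dd_single]
  by_cases h : i = j
  · subst h; simp
  · rw [if_neg h, if_neg]
    intro hh
    apply h
    have := congrArg Fin.val hh
    simp only [Fin.coe_natAdd] at this
    exact Fin.ext (by omega)

lemma Lop_apply (x : E (g + g)) :
    Lop g x = ∑ i : Fin g, ctr (g + g) (be g i) (ctr (g + g) (al g i) x) := by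
  simp [Lop]

set_option maxHeartbeats 1000000 in
lemma lemA {k : ℕ} {x : E (g + g)} (hx : x ∈ P (g + g) ^ k) :
    Lop g (om g * x) = om g * Lop g x + ((g : ℂ) - (k : ℂ)) • x := by
  classical
  set c : Fin g → E (g + g) := fun i => ctr (g + g) (be g i) (ctr (g + g) (al g i) x) with hc
  have hT : ∀ i j : Fin g,
      ctr (g + g) (be g i) (ctr (g + g) (al g i) (Aa g j * (Bb g j * x)))
      = Aa g j * (Bb g j * c i)
        + (if i = j then
            x - Bb g i * ctr (g + g) (be g i) x - Aa g i * ctr (g + g) (al g i) x else 0) := by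
    intro i j
    by_cases h : i = j
    · subst h
      have h1 : al g i (Pi.single (Fin.castAdd g i) (1:ℂ)) = 1 := by rw [al_A, if_pos rfl]
      have h4 : be g i (Pi.single (Fin.natAdd g i) (1:ℂ)) = 1 := by rw [be_B, if_pos rfl]
      rw [if_pos rfl, Aa, Bb, ee_def, ee_def, ctr_pair h1 (al_B i i) (be_A i i) h4 x]
      abel
    · rw [if_neg h, Aa, Bb, ee_def, ee_def, add_zero,
        ctr_cross (by rw [al_A, if_neg h]) (al_B i j) _,
        ctr_cross (be_A i j) (by rw [be_B, if_neg h]) _]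
  have hom : om g * x = ∑ j : Fin g, Aa g j * (Bb g j * x) := by
    rw [om, Finset.sum_mul]
    exact Finset.sum_congr rfl fun j _ => mul_assoc _ _ _
  have hmain : Lop g (om g * x) = ∑ i : Fin g, ∑ j : Fin g,
      (Aa g j * (Bb g j * c i)
        + (if i = j then
            x - Bb g i * ctr (g + g) (be g i) x - Aa g i * ctr (g + g) (al g i) x else 0)) := by
    rw [Lop_apply, hom]
    refine Finset.sum_congr rfl fun i _ => ?_
    rw [map_sum, map_sum]
    exact Finset.sum_congr rfl fun j _ => hT i j
  rw [hmain]
  have hsplit : ∀ i : Fin g, ∑ j : Fin g,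
      (Aa g j * (Bb g j * c i)
        + (if i = j then
            x - Bb g i * ctr (g + g) (be g i) x - Aa g i * ctr (g + g) (al g i) x else 0))
      = om g * c i
        + (x - Bb g i * ctr (g + g) (be g i) x - Aa g i * ctr (g + g) (al g i) x) := by
    intro i
    rw [Finset.sum_add_distrib, Finset.sum_ite_eq _ i _  , if_pos (Finset.mem_univ i)]
    congr 1
    rw [om, Finset.sum_mul]
    exact Finset.sum_congr rfl fun j _ => (mul_assoc _ _ _).symm
  rw [Finset.sum_congr rfl fun i _ => hsplit i, Finset.sum_add_distrib, ← Finset.mul_sum,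
    ← Lop_apply]
  congr 1
  have heuler0 := euler hx
  rw [Fin.sum_univ_add] at heuler0
  have heuler : ∑ i : Fin g, Aa g i * ctr (g + g) (al g i) x
      + ∑ i : Fin g, Bb g i * ctr (g + g) (be g i) x = (k : ℂ) • x := heuler0
  have hsum : ∑ i : Fin g,
      (x - Bb g i * ctr (g + g) (be g i) x - Aa g i * ctr (g + g) (al g i) x)
      = (g : ℂ) • x - (∑ i : Fin g, Aa g i * ctr (g + g) (al g i) x
          + ∑ i : Fin g, Bb g i * ctr (g + g) (be g i) x) := by
    rw [Finset.sum_sub_distrib, Finset.sum_sub_distrib, Finset.sum_const, Finset.card_univ,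
      Fintype.card_fin, ← Nat.cast_smul_eq_nsmul (R := ℂ)]
    abel
  rw [hsum, heuler, sub_smul]


lemma om_mem : om g ∈ P (g + g) ^ 2 := by
  rw [om]
  refine Submodule.sum_mem _ fun i _ => ?_
  rw [pow_two]
  exact Submodule.mul_mem_mul ⟨_, rfl⟩ ⟨_, rfl⟩

lemma om_pow_mul_mem {m : ℕ} {x : E (g + g)} (hx : x ∈ P (g + g) ^ m) (r : ℕ) :
    om g ^ r * x ∈ P (g + g) ^ (m + 2 * r) := by
  induction r with
  | zero => simpa using hx
  | succ r ih =>
    rw [pow_succ', mul_assoc]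
    have h2 := Submodule.mul_mem_mul (om_mem (g := g)) ih
    rw [← pow_add] at h2
    have h3 : 2 + (m + 2 * r) = m + 2 * (r + 1) := by omega
    rwa [h3] at h2

lemma Lop_zero {m : ℕ} {x : E (g + g)} (hx : x ∈ P (g + g) ^ m) (hm : m ≤ 1) :
    Lop g x = 0 := by
  rw [Lop_apply]
  refine Finset.sum_eq_zero fun i _ => ?_
  rcases Nat.lt_or_ge m 1 with h | h
  · have hm0 : m = 0 := by omega
    subst hm0
    rw [ctr_P0 _ hx, map_zero]
  · have hm1 : m = 1 := by omega
    subst hm1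
    exact ctr_P0 _ (ctr_mem _ hx)

lemma Lop_mem {m : ℕ} {x : E (g + g)} (hx : x ∈ P (g + g) ^ (m + 2)) :
    Lop g x ∈ P (g + g) ^ m := by
  rw [Lop_apply]
  exact Submodule.sum_mem _ fun i _ => ctr_mem _ (ctr_mem _ hx)

lemma lemApow {m : ℕ} {x : E (g + g)} (hx : x ∈ P (g + g) ^ m) : ∀ r : ℕ,
    Lop g (om g ^ r * x) = om g ^ r * Lop g x
      + (((r : ℂ)) * ((g : ℂ) - (m : ℂ) - (r : ℂ) + 1)) • (om g ^ (r - 1) * x) := by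
  intro r
  induction r with
  | zero => simp
  | succ r ih =>
    have hmem : om g ^ r * x ∈ P (g + g) ^ (m + 2 * r) := om_pow_mul_mem hx r
    have h1 : om g ^ (r + 1) * x = om g * (om g ^ r * x) := by rw [pow_succ', mul_assoc]
    rw [h1, lemA hmem, ih, mul_add, ← mul_assoc, ← pow_succ', mul_smul_comm]
    rcases Nat.eq_zero_or_pos r with hr | hr
    · subst hr
      simp only [Nat.cast_zero, zero_mul, zero_smul, mul_zero, add_zero, pow_zero, one_mul,
        pow_one, Nat.add_sub_cancel, Nat.cast_one, Nat.cast_add, Nat.mul_zero, Nat.add_zero]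
      congr 1
      ring_nf
    · have h2 : om g * (om g ^ (r - 1) * x) = om g ^ r * x := by
        rw [← mul_assoc, ← pow_succ']
        congr 2
        omega
      rw [h2, Nat.add_sub_cancel]
      have h3 : ((r + 1 : ℕ) : ℂ) * ((g : ℂ) - (m : ℂ) - ((r + 1 : ℕ) : ℂ) + 1)
          = (r : ℂ) * ((g : ℂ) - (m : ℂ) - (r : ℂ) + 1)
            + ((g : ℂ) - ((m + 2 * r : ℕ) : ℂ)) := by
        push_cast
        ring
      rw [h3, add_smul]
      abel

lemma descent : ∀ m r : ℕ, ∀ x : E (g + g), x ∈ P (g + g) ^ m → m + r ≤ g →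
    om g ^ r * x = 0 → x = 0 := by
  intro m
  induction m using Nat.strong_induction_on with
  | _ m ihm =>
    intro r
    induction r with
    | zero =>
      intro x hx _ h0
      simpa using h0
    | succ r ihr =>
      intro x hx hle h0
      have hA := lemApow hx (r + 1)
      rw [h0, map_zero, Nat.add_sub_cancel] at hA
      have hsub : m + r ≤ g := by omega
      have hcoef : ((r + 1 : ℕ) : ℂ) * ((g : ℂ) - (m : ℂ) - ((r + 1 : ℕ) : ℂ) + 1) ≠ 0 := by
        have h4 : (g : ℂ) - (m : ℂ) - ((r + 1 : ℕ) : ℂ) + 1 = ((g - (m + r) : ℕ) : ℂ) := by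
          rw [Nat.cast_sub hsub]
          push_cast
          ring
        rw [h4]
        refine mul_ne_zero ?_ ?_
        · exact Nat.cast_ne_zero.mpr (Nat.succ_ne_zero r)
        · refine Nat.cast_ne_zero.mpr ?_
          omega
      rcases Nat.lt_or_ge m 2 with hm | hm
      · rw [Lop_zero hx (by omega), mul_zero, zero_add] at hA
        have h5 : om g ^ r * x = 0 := by
          have := hA.symm
          rcases smul_eq_zero.mp this with h | h
          · exact absurd h hcoef
          · exact h
        exact ihr x hx (by omega) h5
      · have hx' : x ∈ P (g + g) ^ ((m - 2) + 2) := by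
          have h6 : m - 2 + 2 = m := by omega
          rwa [h6]
        have hy : Lop g x ∈ P (g + g) ^ (m - 2) := Lop_mem hx'
        have hmul : om g ^ (r + 2) * Lop g x = 0 := by
          have h7 := congrArg (fun z => om g * z) hA
          simp only [mul_zero, mul_add, mul_smul_comm, ← mul_assoc, ← pow_succ'] at h7
          rw [h0, smul_zero, add_zero] at h7
          exact h7.symm
        have hy0 : Lop g x = 0 :=
          ihm (m - 2) (by omega) (r + 2) (Lop g x) hy (by omega) hmul
        rw [hy0, mul_zero, zero_add] at hA
        have h5 : om g ^ r * x = 0 := by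
          rcases smul_eq_zero.mp hA.symm with h | h
          · exact absurd h hcoef
          · exact h
        exact ihr x hx (by omega) h5

end Symplectic

end OmegaWedge


set_option maxHeartbeats 2000000 in
/-- For a `2g`-dimensional symplectic vector space `V` with
`ω = ∑ εᵢ ∧ μᵢ`, wedging with `ω` is injective from `Λ^{k-2}V` to `Λ^kV`
for `k ≤ g`, and consequently `dim W^k = C(2g,k) - C(2g,k-2)` for `k ≤ g`,
where `W^k = Λ^kV / (ω ∧ Λ^{k-2}V)`.  Here `ΛV` is realized as the exterior
algebra, `Λ^kV = (range ι)^k`, and for `k < 2` the space `Λ^{k-2}V` is read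
as the zero space (so that the binomial `C(2g,k-2)` term is absent). -/
theorem omega_wedge_injective_and_dim_Wk (g : ℕ)
    (ι : (Fin (g + g) → ℂ) →ₗ[ℂ] ExteriorAlgebra ℂ (Fin (g + g) → ℂ))
    (hι : ι = ExteriorAlgebra.ι ℂ)
    (ω : ExteriorAlgebra ℂ (Fin (g + g) → ℂ))
    (hω : ω = ∑ i : Fin g,
      ι (Pi.single (Fin.castAdd g i) 1) * ι (Pi.single (Fin.natAdd g i) 1))
    (Lam : ℕ → Submodule ℂ (ExteriorAlgebra ℂ (Fin (g + g) → ℂ)))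
    (hLam : ∀ k, Lam k = (LinearMap.range ι) ^ k)
    (Lam' : ℕ → Submodule ℂ (ExteriorAlgebra ℂ (Fin (g + g) → ℂ)))
    (hLam' : ∀ k, Lam' k = if 2 ≤ k then Lam (k - 2) else ⊥)
    (k : ℕ) (hk : k ≤ g) :
    Set.InjOn (fun x => ω * x) (Lam' k : Set (ExteriorAlgebra ℂ (Fin (g + g) → ℂ))) ∧
    Module.finrank ℂ ((Lam k) ⧸ Submodule.comap (Lam k).subtype
        (Submodule.map (LinearMap.mulLeft ℂ ω) (Lam' k)))
      = Nat.choose (2 * g) k - (if 2 ≤ k then Nat.choose (2 * g) (k - 2) else 0) := by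
  subst hι
  have homega : ω = OmegaWedge.om g := by rw [hω]; rfl
  have hLamP : ∀ j, Lam j = OmegaWedge.P (g + g) ^ j := by
    intro j; rw [hLam]; rfl
  -- injectivity of multiplication by ω on Lam' k
  have inj : ∀ z, z ∈ Lam' k → ω * z = 0 → z = 0 := by
    intro z hz h0
    rw [hLam' k] at hz
    by_cases h2 : 2 ≤ k
    · rw [if_pos h2, hLamP] at hz
      refine OmegaWedge.descent (g := g) (k - 2) 1 z hz (by omega) ?_
      rw [pow_one, ← homega]
      exact h0
    · rw [if_neg h2] at hz
      simpa using hz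
  constructor
  · intro x hx y hy hxy
    have hsub : x - y ∈ Lam' k := Submodule.sub_mem _ hx hy
    have h0 : ω * (x - y) = 0 := by
      rw [mul_sub, sub_eq_zero]
      exact hxy
    have := inj _ hsub h0
    exact sub_eq_zero.mp this
  · set N := Submodule.comap (Lam k).subtype
      (Submodule.map (LinearMap.mulLeft ℂ ω) (Lam' k)) with hN
    haveI hfdk : FiniteDimensional ℂ (Lam k) := by
      rw [hLamP k]; infer_instance
    have hNle : Submodule.map (LinearMap.mulLeft ℂ ω) (Lam' k) ≤ Lam k := by
      rintro _ ⟨z, hz, rfl⟩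
      rw [hLam' k] at hz
      rw [LinearMap.mulLeft_apply, homega, hLamP k]
      by_cases h2 : 2 ≤ k
      · rw [if_pos h2, hLamP] at hz
        have := Submodule.mul_mem_mul (OmegaWedge.om_mem (g := g)) hz
        rw [← pow_add] at this
        have he : 2 + (k - 2) = k := by omega
        rwa [he] at this
      · rw [if_neg h2] at hz
        have : z = 0 := by simpa using hz
        rw [this, mul_zero]
        exact Submodule.zero_mem _
    have e1 : Module.finrank ℂ N
        = Module.finrank ℂ (Submodule.map (LinearMap.mulLeft ℂ ω) (Lam' k)) :=
      LinearEquiv.finrank_eq (Submodule.comapSubtypeEquivOfLe hNle)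
    have e2 : Module.finrank ℂ (Submodule.map (LinearMap.mulLeft ℂ ω) (Lam' k))
        = if 2 ≤ k then Nat.choose (g + g) (k - 2) else 0 := by
      by_cases h2 : 2 ≤ k
      · rw [if_pos h2]
        haveI : FiniteDimensional ℂ (Lam' k) := by
          rw [hLam' k, if_pos h2, hLamP]; infer_instance
        set f := (LinearMap.mulLeft ℂ ω).comp (Lam' k).subtype with hf
        have hrange : LinearMap.range f = Submodule.map (LinearMap.mulLeft ℂ ω) (Lam' k) := by
          rw [hf, LinearMap.range_comp, Submodule.range_subtype]
        have hker : LinearMap.ker f = ⊥ := by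
          apply LinearMap.ker_eq_bot'.mpr
          intro z hz0
          have hz1 : ω * (z : ExteriorAlgebra ℂ (Fin (g + g) → ℂ)) = 0 := hz0
          have := inj _ z.2 hz1
          exact Subtype.ext this
        have hrn := LinearMap.finrank_range_add_finrank_ker f
        rw [hrange, hker] at hrn
        have hbot : Module.finrank ℂ (⊥ : Submodule ℂ (Lam' k)) = 0 := finrank_bot ℂ _
        rw [hbot, add_zero] at hrn
        rw [hrn]
        have : Module.finrank ℂ (Lam' k) = Nat.choose (g + g) (k - 2) := by
          rw [hLam' k, if_pos h2, hLamP]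
          exact OmegaWedge.finrank_pow (k - 2)
        exact this
      · rw [if_neg h2, hLam' k, if_neg h2, Submodule.map_bot]
        exact finrank_bot ℂ _
    have hquot := Submodule.finrank_quotient_add_finrank N
    have hLamrank : Module.finrank ℂ (Lam k) = Nat.choose (g + g) k := by
      rw [hLamP k]
      exact OmegaWedge.finrank_pow k
    have h2g : 2 * g = g + g := two_mul g
    rw [h2g]
    by_cases h2 : 2 ≤ k
    · rw [if_pos h2] at e2 ⊢
      omega
    · rw [if_neg h2] at e2 ⊢
      omega
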